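/- Let J be convex, positively one-homogeneous and non-negative with smallest singular value λ₀ = inf{J(u) : ‖Ku‖_H = 1} (infimum over the normalized set, restricted appropriately so λ₀ > 0). Let f ∈ H, α > 0, and u^α minimize u ↦ (1/2)‖Ku − f‖²_H + αJ(u). Then ‖Ku^α‖_H ≤ max{‖f‖_H − αλ₀, 0}. Consequently, if ‖f‖_H ≥ αλ₀ then ‖Ku^α − f‖_H ≥ αλ₀. -/

import Mathlib

open scoped RealInnerProductSpace

/-- Bias of variational methods: if `λ₀ > 0` is the smallest singular value
(`J v ≥ λ₀` for all `v` with `‖Kv‖ = 1`) and `u^α` minimizes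
`u ↦ ½‖Ku − f‖² + αJ(u)`, then `‖K u^α‖ ≤ max (‖f‖ − αλ₀) 0`; consequently, if
`‖f‖ ≥ αλ₀` then `‖K u^α − f‖ ≥ αλ₀`. -/
theorem bias_of_variational_methods
    {U H : Type*} [NormedAddCommGroup U] [NormedSpace ℝ U]
    [NormedAddCommGroup H] [InnerProductSpace ℝ H]
    (K : U →L[ℝ] H) (J : U → ℝ) (hJnn : ∀ u, 0 ≤ J u)
    (hconv : ∀ (u v : U) (t : ℝ), 0 ≤ t → t ≤ 1 →
      J (t • u + (1 - t) • v) ≤ t * J u + (1 - t) * J v)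
    (hhom : ∀ (c : ℝ), 0 < c → ∀ u, J (c • u) = c * J u)
    (lam₀ : ℝ) (hlam₀ : 0 < lam₀)
    (hground : ∀ v : U, ‖K v‖ = 1 → lam₀ ≤ J v)
    (f : H) (α : ℝ) (hα : 0 < α) (uα : U)
    (hmin : ∀ u : U, (1/2) * ‖K uα - f‖ ^ 2 + α * J uα ≤ (1/2) * ‖K u - f‖ ^ 2 + α * J u) :
    ‖K uα‖ ≤ max (‖f‖ - α * lam₀) 0 ∧
    (α * lam₀ ≤ ‖f‖ → α * lam₀ ≤ ‖K uα - f‖) := by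
  set N := ‖K uα‖ with hN
  set P : ℝ := inner ℝ (K uα) f with hP
  -- Step 1: for every s ∈ (0,1], comparison with (1-s)•uα gives an inequality
  have key : ∀ s : ℝ, 0 < s → s ≤ 1 → α * J uα + N ^ 2 - P ≤ (s / 2) * N ^ 2 := by
    intro s hs hs1
    have ht : (0:ℝ) < 1 - s ∨ (1:ℝ) - s = 0 := by rcases lt_or_eq_of_le (by linarith : (0:ℝ) ≤ 1 - s) with h | h
                                                  · exact Or.inl h
                                                  · exact Or.inr h.symm
    have hmin' := hmin ((1 - s) • uα)
    have hK : K ((1 - s) • uα) = (1 - s) • K uα := by simp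
    have hJs : J ((1 - s) • uα) ≤ (1 - s) * J uα := by
      rcases ht with h | h
      · rw [hhom (1 - s) h uα]
      · rw [h, zero_smul]
        have := hhom 1 one_pos 0
        simp at this
        -- J 0 = 0 : use homogeneity with c = 2 on 0
        have h2 : J ((2:ℝ) • (0:U)) = 2 * J 0 := hhom 2 (by norm_num) 0
        simp at h2
        linarith [h2]
    have e1 : ‖K uα - f‖ ^ 2 = N ^ 2 - 2 * P + ‖f‖ ^ 2 := by
      rw [hN, hP, @norm_sub_sq_real]
    have e2 : ‖K ((1 - s) • uα) - f‖ ^ 2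
        = (1 - s) ^ 2 * N ^ 2 - 2 * ((1 - s) * P) + ‖f‖ ^ 2 := by
      rw [hK, @norm_sub_sq_real, norm_smul, real_inner_smul_left]
      rw [Real.norm_eq_abs, abs_of_nonneg (by linarith : (0:ℝ) ≤ 1 - s)]
      ring
    rw [e1, e2] at hmin'
    -- hmin' : ... ≤ ..., with J ((1-s)•uα) ≤ (1-s) J uα
    have h3 : (1/2) * (N ^ 2 - 2 * P + ‖f‖ ^ 2) + α * J uα
        ≤ (1/2) * ((1 - s) ^ 2 * N ^ 2 - 2 * ((1 - s) * P) + ‖f‖ ^ 2)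
          + α * ((1 - s) * J uα) := by nlinarith [hmin']
    -- this says: 0 ≤ s * ((s/2) N² - N² + P - α J uα)
    have h4 : 0 ≤ s * ((s / 2) * N ^ 2 - (α * J uα + N ^ 2 - P)) := by nlinarith [h3]
    nlinarith [h4, hs]
  -- Step 2: let s → 0
  have main : α * J uα + N ^ 2 - P ≤ 0 := by
    by_contra hcon
    push_neg at hcon
    set a := α * J uα + N ^ 2 - P with ha
    have hNc : (0:ℝ) < N ^ 2 + 1 := by positivity
    have hs : 0 < min 1 (a / (N ^ 2 + 1)) := lt_min one_pos (div_pos hcon hNc)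
    have hk := key (min 1 (a / (N ^ 2 + 1))) hs (min_le_left _ _)
    have hle : min 1 (a / (N ^ 2 + 1)) ≤ a / (N ^ 2 + 1) := min_le_right _ _
    have hN2 : (0:ℝ) ≤ N ^ 2 := sq_nonneg N
    have : (min 1 (a / (N ^ 2 + 1)) / 2) * N ^ 2 < a := by
      have h1 : (min 1 (a / (N ^ 2 + 1))) * N ^ 2 ≤ (a / (N ^ 2 + 1)) * N ^ 2 :=
        mul_le_mul_of_nonneg_right hle hN2
      have h2 : (a / (N ^ 2 + 1)) * N ^ 2 < a := by
        rw [div_mul_eq_mul_div, div_lt_iff₀ hNc]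
        nlinarith [hcon]
      nlinarith [hs]
    linarith [hk]
  -- Step 3: Cauchy-Schwarz
  have hCS : P ≤ N * ‖f‖ := by
    rw [hP, hN]; exact real_inner_le_norm _ _
  have hmain2 : α * J uα + N ^ 2 ≤ N * ‖f‖ := by linarith
  -- Step 4: first conclusion
  have hNnn : 0 ≤ N := norm_nonneg _
  have first : N ≤ max (‖f‖ - α * lam₀) 0 := by
    rcases eq_or_lt_of_le hNnn with h0 | h0
    · rw [← h0]; exact le_max_right _ _
    · -- ground state: λ₀ N ≤ J uα
      have hgr : lam₀ * N ≤ J uα := by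
        have hc : (0:ℝ) < N⁻¹ := inv_pos.mpr h0
        have hv : ‖K (N⁻¹ • uα)‖ = 1 := by
          rw [map_smul, norm_smul, Real.norm_eq_abs, abs_of_pos hc, ← hN]
          field_simp
        have := hground (N⁻¹ • uα) hv
        rw [hhom N⁻¹ hc uα] at this
        calc lam₀ * N ≤ (N⁻¹ * J uα) * N := mul_le_mul_of_nonneg_right this (le_of_lt h0)
          _ = J uα := by field_simp
      have : α * (lam₀ * N) + N ^ 2 ≤ N * ‖f‖ := by
        nlinarith [mul_le_mul_of_nonneg_left hgr (le_of_lt hα)]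
      have : α * lam₀ + N ≤ ‖f‖ := by
        have hdiv : N * (α * lam₀ + N) ≤ N * ‖f‖ := by nlinarith
        exact le_of_mul_le_mul_left hdiv h0
      exact le_max_of_le_left (by linarith)
  refine ⟨first, fun hf => ?_⟩
  have hmaxeq : max (‖f‖ - α * lam₀) 0 = ‖f‖ - α * lam₀ := max_eq_left (by linarith)
  have htri : ‖f‖ - N ≤ ‖K uα - f‖ := by
    have := norm_sub_norm_le f (K uα)
    rw [← norm_neg (f - K uα), neg_sub] at this
    linarith [this]
  rw [hmaxeq] at first
  linarith
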